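/- Let p > 3 be a prime. Then ∑_{k=0}^{p-1} C_k ≡ (3·(p/3) - 1)/2 (mod p), where C_k = C(2k,k)/(k+1) is the k-th Catalan number and (p/3) is the Legendre symbol. -/

import Mathlib

open Finset Nat

/-- Key integer identity: `2 C_k = 4 B_k - B_{k+1}` with `B` the central binomial. -/
lemma two_mul_catalan_int (k : ℕ) :
    (2 * catalan k : ℤ) = 4 * Nat.centralBinom k - Nat.centralBinom (k + 1) := by
  have h1 : ((k : ℤ) + 1) * catalan k = Nat.centralBinom k := by
    exact_mod_cast congrArg (Nat.cast : ℕ → ℤ) (succ_mul_catalan_eq_centralBinom k)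
  have h2 : ((k : ℤ) + 1) * Nat.centralBinom (k + 1)
      = 2 * (2 * k + 1) * Nat.centralBinom k := by
    exact_mod_cast congrArg (Nat.cast : ℕ → ℤ) (Nat.succ_mul_centralBinom_succ k)
  have hne : ((k : ℤ) + 1) ≠ 0 := by positivity
  apply mul_left_cancel₀ hne
  linear_combination 2 * h1 + h2

theorem stmt9 (p : ℕ) (hp : p.Prime) (hp3 : 3 < p) :
    (∑ k ∈ Finset.range p, (catalan k : ZMod p)) =
      (((3 * legendreSym 3 p - 1) / 2 : ℤ) : ZMod p) := by
  haveI : Fact p.Prime := ⟨hp⟩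
  haveI : Fact (Nat.Prime 3) := ⟨by norm_num⟩
  have hp2 : p ≠ 2 := by omega
  have hodd : p % 2 = 1 := Nat.odd_iff.mp (hp.odd_of_ne_two hp2)
  set n : ℕ := p / 2 with hn
  have hpn : 2 * n + 1 = p := by omega
  -- basic nonvanishing facts
  have hcast0 : ∀ m : ℕ, 0 < m → m < p → ((m : ZMod p) ≠ 0) := by
    intro m hm hmp h0
    rw [ZMod.natCast_eq_zero_iff] at h0
    exact absurd (Nat.le_of_dvd hm h0) (by omega)
  -- B_k ≡ (-4)^k * choose n k  for k ≤ n
  have hB : ∀ k ≤ n, (Nat.centralBinom k : ZMod p) = (-4) ^ k * (n.choose k : ZMod p) := by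
    intro k hk
    induction k with
    | zero => simp [Nat.centralBinom]
    | succ k ih =>
      have hk' : k ≤ n := by omega
      have hkn : k < n := by omega
      have IH := ih hk'
      have hne : ((k : ZMod p) + 1) ≠ 0 := by
        have := hcast0 (k + 1) (by omega) (by omega)
        push_cast at this; exact this
      have hze : (2 * (n : ZMod p) + 1) = 0 := by
        have : ((2 * n + 1 : ℕ) : ZMod p) = 0 := by rw [hpn]; exact ZMod.natCast_self p
        push_cast at this; exact this
      have h2 : ((k : ZMod p) + 1) * Nat.centralBinom (k + 1)
          = 2 * (2 * k + 1) * Nat.centralBinom k := by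
        have := congrArg (Nat.cast : ℕ → ZMod p) (Nat.succ_mul_centralBinom_succ k)
        push_cast at this; exact this
      have h3 : (n.choose (k + 1) : ZMod p) * ((k : ZMod p) + 1)
          = (n.choose k : ZMod p) * ((n : ZMod p) - k) := by
        have := congrArg (Nat.cast : ℕ → ZMod p) (Nat.choose_succ_right_eq n k)
        push_cast [Nat.cast_sub hk'] at this ⊢
        exact_mod_cast this
      apply mul_left_cancel₀ hne
      calc ((k : ZMod p) + 1) * Nat.centralBinom (k + 1)
          = 2 * (2 * k + 1) * Nat.centralBinom k := h2
        _ = 2 * (2 * k + 1) * ((-4) ^ k * (n.choose k : ZMod p)) := by rw [IH]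
        _ = (-4) ^ (k + 1) * ((n.choose k : ZMod p) * ((n : ZMod p) - k)) := by
            linear_combination (2 * (-4 : ZMod p) ^ k * (n.choose k : ZMod p)) * hze
        _ = (-4) ^ (k + 1) * ((n.choose (k + 1) : ZMod p) * ((k : ZMod p) + 1)) := by rw [h3]
        _ = ((k : ZMod p) + 1) * ((-4) ^ (k + 1) * (n.choose (k + 1) : ZMod p)) := by ring
  -- B_k ≡ 0 for n < k < p
  have hB0 : ∀ k, n < k → k < p → (Nat.centralBinom k : ZMod p) = 0 := by
    intro k hk1 hk2
    have hdvd : p ∣ Nat.centralBinom k := by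
      show p ∣ (2 * k).choose k
      exact hp.dvd_choose hk2 (by omega) (by omega)
    exact (ZMod.natCast_eq_zero_iff _ _).mpr hdvd
  -- S = ∑_{k<p} B_k = (-3)^n
  set S : ZMod p := ∑ k ∈ Finset.range p, (Nat.centralBinom k : ZMod p) with hS
  have hSval : S = (-3 : ZMod p) ^ n := by
    have hsub : Finset.range (n + 1) ⊆ Finset.range p := by
      apply Finset.range_subset_range.mpr; omega
    have h1 : S = ∑ k ∈ Finset.range (n + 1), (Nat.centralBinom k : ZMod p) := by
      rw [hS]
      refine (Finset.sum_subset hsub ?_).symm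
      intro x hx hx'
      simp only [Finset.mem_range] at hx hx'
      exact hB0 x (by omega) hx
    rw [h1, Finset.sum_congr rfl fun k hk => hB k (Nat.lt_succ_iff.mp (Finset.mem_range.mp hk))]
    have hpow := add_pow (-4 : ZMod p) 1 n
    simp only [one_pow, mul_one] at hpow
    rw [show (-3 : ZMod p) = -4 + 1 by ring, hpow]
  -- B_p ≡ 2
  have hBp : (Nat.centralBinom p : ZMod p) = 2 := by
    have hv : Nat.centralBinom p
        = ∑ ij ∈ Finset.HasAntidiagonal.antidiagonal p, p.choose ij.1 * p.choose ij.2 := by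
      rw [Nat.centralBinom, two_mul, Nat.add_choose_eq]
    rw [hv]
    push_cast
    rw [Finset.Nat.sum_antidiagonal_eq_sum_range_succ_mk]
    rw [Finset.sum_range_succ]
    have hlast : (p.choose p : ZMod p) * (p.choose (p - p) : ZMod p) = 1 := by
      simp
    have hrest : (∑ k ∈ Finset.range p,
        (p.choose k : ZMod p) * (p.choose (p - k) : ZMod p)) = 1 := by
      rw [Finset.sum_eq_single_of_mem 0 (Finset.mem_range.mpr (by omega))]
      · simp
      · intro k hk hk0
        have hkp : k < p := Finset.mem_range.mp hk
        have : (p.choose k : ZMod p) = 0 := by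
          exact (ZMod.natCast_eq_zero_iff _ _).mpr
            (hp.dvd_choose_self hk0 hkp)
        rw [this, zero_mul]
    rw [hrest, hlast]; ring
  -- the Legendre symbol computation
  have hL : ((legendreSym 3 p : ℤ) : ZMod p) = (-3 : ZMod p) ^ n := by
    have e2 : legendreSym p (-3) = legendreSym 3 p := by
      have hm : legendreSym p (-3) = legendreSym p (-1) * legendreSym p 3 := by
        rw [show (-3 : ℤ) = -1 * 3 by norm_num, legendreSym.mul]
      have hqr := legendreSym.quadratic_reciprocity' (p := p) (q := 3) hp2 (by norm_num)
      have hneg1 : legendreSym p (-1) = (-1) ^ (p / 2) := by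
        rw [legendreSym.at_neg_one hp2, ZMod.χ₄_eq_neg_one_pow hodd]
      rw [hm, hneg1, hqr]
      norm_num
    have := legendreSym.eq_pow p (-3)
    rw [← e2, ← hn] at *
    rw [this]
    push_cast
    ring_nf
  -- value of the Legendre symbol is ±1, hence parity
  have hLval : legendreSym 3 p = 1 ∨ legendreSym 3 p = -1 := by
    apply legendreSym.eq_one_or_neg_one
    intro h0
    have : ((p : ℤ) : ZMod 3) = (p : ZMod 3) := by push_cast; ring
    rw [this, ZMod.natCast_eq_zero_iff] at h0
    have h3p : 3 = p := ((Nat.prime_dvd_prime_iff_eq (by norm_num) hp).mp h0)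
    omega
  have hdvd : (2 : ℤ) ∣ 3 * legendreSym 3 p - 1 := by
    rcases hLval with h | h <;> rw [h] <;> decide
  -- final assembly
  have h2ne : (2 : ZMod p) ≠ 0 := by
    have := hcast0 2 (by omega) (by omega)
    push_cast at this; exact this
  apply mul_left_cancel₀ h2ne
  have hsum2 : (2 : ZMod p) * (∑ k ∈ Finset.range p, (catalan k : ZMod p))
      = 3 * S - (Nat.centralBinom p : ZMod p) + 1 := by
    have hterm : ∀ k, (2 : ZMod p) * (catalan k : ZMod p)
        = 4 * (Nat.centralBinom k : ZMod p) - (Nat.centralBinom (k + 1) : ZMod p) := by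
      intro k
      have := congrArg (Int.cast : ℤ → ZMod p) (two_mul_catalan_int k)
      push_cast at this
      exact this
    rw [Finset.mul_sum, Finset.sum_congr rfl fun k _ => hterm k, Finset.sum_sub_distrib,
      ← Finset.mul_sum]
    have hshift : (∑ k ∈ Finset.range p, (Nat.centralBinom (k + 1) : ZMod p))
        = S + (Nat.centralBinom p : ZMod p) - 1 := by
      have h1 := Finset.sum_range_succ' (fun k => (Nat.centralBinom k : ZMod p)) p
      have h2 := Finset.sum_range_succ (fun k => (Nat.centralBinom k : ZMod p)) p
      rw [h2] at h1
      have : (Nat.centralBinom 0 : ZMod p) = 1 := by simp [Nat.centralBinom]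
      rw [this, ← hS] at h1
      linear_combination -h1
    rw [hshift, ← hS]
    ring
  rw [hsum2, hBp, hSval, ← hL]
  have hR : (2 : ZMod p) * (((3 * legendreSym 3 p - 1) / 2 : ℤ) : ZMod p)
      = ((3 * legendreSym 3 p - 1 : ℤ) : ZMod p) := by
    rw [← Int.cast_ofNat, ← Int.cast_mul, Int.mul_ediv_cancel' hdvd]
  rw [hR]
  push_cast
  ring
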